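/- If Z is a standard normal random variable, then for every positive integer k, E|Z^2 − 1|^k ≤ 4^k (⌈k/2⌉!)^2. -/

import Mathlib

open MeasureTheory ProbabilityTheory Real

section aux
open Set
open scoped ENNReal NNReal

lemma my_integral_gauss (g : ℝ → ℝ) :
    ∫ x, g x ∂(gaussianReal 0 1) = ∫ x, gaussianPDFReal 0 1 x * g x := by
  rw [gaussianReal_of_var_ne_zero 0 one_ne_zero]
  have hd : gaussianPDF 0 1 = fun x => ((gaussianPDFReal 0 1 x).toNNReal : ℝ≥0∞) := rfl
  rw [hd, integral_withDensity_eq_integral_smul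
      ((measurable_gaussianPDFReal 0 1).real_toNNReal) g]
  congr 1
  ext x
  simp [NNReal.smul_def, Real.coe_toNNReal _ (gaussianPDFReal_nonneg 0 1 x)]

lemma my_integrable_gauss (g : ℝ → ℝ)
    (h : Integrable (fun x => gaussianPDFReal 0 1 x * g x) volume) :
    Integrable g (gaussianReal 0 1) := by
  rw [gaussianReal_of_var_ne_zero 0 one_ne_zero]
  have hd : gaussianPDF 0 1 = fun x => ((gaussianPDFReal 0 1 x).toNNReal : ℝ≥0∞) := rfl
  rw [hd, integrable_withDensity_iff_integrable_smul
      ((measurable_gaussianPDFReal 0 1).real_toNNReal)]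
  refine h.congr (Filter.Eventually.of_forall fun x => ?_)
  simp [NNReal.smul_def, Real.coe_toNNReal _ (gaussianPDFReal_nonneg 0 1 x)]

lemma my_pdf_eq (x : ℝ) : gaussianPDFReal 0 1 x = (√(2*π))⁻¹ * exp (-x^2/2) := by
  simp [gaussianPDFReal]

lemma my_int_Ioi (k : ℕ) : ∫ x in Ioi (0:ℝ), x ^ (2*k) * exp (-x^2/2)
    = (1/2) * ((2:ℝ) ^ ((k:ℝ) + 1/2) * Real.Gamma ((k:ℝ) + 1/2)) := by
  have h := integral_comp_rpow_Ioi_of_pos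
    (g := fun y : ℝ => (1/2:ℝ) * (y ^ ((k:ℝ) + 1/2 - 1) * exp (-(1/2 * y)))) (p := 2) two_pos
  have h2 : ∫ y in Ioi (0:ℝ), (1/2:ℝ) * (y ^ ((k:ℝ) + 1/2 - 1) * exp (-(1/2 * y)))
      = (1/2) * ((1/(1/2):ℝ) ^ ((k:ℝ) + 1/2) * Real.Gamma ((k:ℝ) + 1/2)) := by
    rw [integral_const_mul, integral_rpow_mul_exp_neg_mul_Ioi (by positivity) (by norm_num)]
  have h3 : ∀ x ∈ Ioi (0:ℝ),
      ((2:ℝ) * x ^ ((2:ℝ) - 1)) • ((1/2:ℝ) * ((x ^ (2:ℝ)) ^ ((k:ℝ) + 1/2 - 1)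
        * exp (-(1/2 * x ^ (2:ℝ))))) = x ^ (2*k) * exp (-x^2/2) := by
    intro x hx
    have hx0 : (0:ℝ) < x := hx
    have e1 : x ^ (2:ℝ) = x ^ (2:ℕ) := by
      rw [← Real.rpow_natCast x 2]; norm_num
    have e2 : (x ^ (2:ℝ)) ^ ((k:ℝ) + 1/2 - 1) = x ^ ((2:ℝ) * ((k:ℝ) + 1/2 - 1)) := by
      rw [← Real.rpow_mul hx0.le]
    have e3 : x ^ ((2:ℝ) - 1) = x := by
      rw [show (2:ℝ)-1 = 1 by norm_num, Real.rpow_one]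
    have e4 : x * x ^ ((2:ℝ) * ((k:ℝ) + 1/2 - 1)) = x ^ (2*k : ℕ) := by
      nth_rewrite 1 [← Real.rpow_one x]
      rw [← Real.rpow_add hx0, ← Real.rpow_natCast x (2*k)]
      push_cast
      ring_nf
    rw [smul_eq_mul, e2, e3, e1]
    rw [show -(1/2 * (x^(2:ℕ):ℝ)) = -x^2/2 by ring]
    rw [← e4]
    ring
  rw [← setIntegral_congr_fun measurableSet_Ioi h3, h, h2]
  norm_num

lemma my_int_real (k : ℕ) : ∫ x : ℝ, x ^ (2*k) * exp (-x^2/2)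
    = (2:ℝ) ^ ((k:ℝ) + 1/2) * Real.Gamma ((k:ℝ) + 1/2) := by
  have heven : ∀ x : ℝ, |x| ^ (2*k) * exp (-|x|^2/2) = x ^ (2*k) * exp (-x^2/2) := by
    intro x
    rw [(even_two_mul k).pow_abs, sq_abs]
  calc ∫ x : ℝ, x ^ (2*k) * exp (-x^2/2)
      = ∫ x : ℝ, |x| ^ (2*k) * exp (-|x|^2/2) := by
        refine integral_congr_ae (Filter.Eventually.of_forall fun x => ?_)
        exact (heven x).symm
    _ = 2 * ∫ x in Ioi (0:ℝ), x ^ (2*k) * exp (-x^2/2) :=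
        integral_comp_abs (f := fun x => x ^ (2*k) * exp (-x^2/2))
    _ = (2:ℝ) ^ ((k:ℝ) + 1/2) * Real.Gamma ((k:ℝ) + 1/2) := by
        rw [my_int_Ioi]; ring

lemma my_integrable_pow_exp (k : ℕ) :
    Integrable (fun x : ℝ => x ^ (2*k) * exp (-x^2/2)) volume := by
  have h := integrable_rpow_mul_exp_neg_mul_sq (b := (1/2:ℝ)) (by norm_num)
    (s := ((2*k : ℕ) : ℝ)) (lt_of_lt_of_le neg_one_lt_zero (by positivity))
  refine h.congr (Filter.Eventually.of_forall fun x => ?_)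
  simp only [Real.rpow_natCast]
  rw [show -(1/2:ℝ)*x^2 = -x^2/2 by ring]

lemma my_gamma_le (k : ℕ) (hk : 1 ≤ k) : Real.Gamma ((k:ℝ) + 1/2) ≤ k.factorial := by
  have key : Real.Gamma ((k:ℝ) + 1) = k.factorial := Real.Gamma_nat_eq_factorial k
  rcases eq_or_lt_of_le hk with h1 | h2
  · rw [← h1]
    have : ((1:ℕ):ℝ) + 1/2 = 1/2 + 1 := by norm_num
    rw [this, Real.Gamma_add_one (by norm_num), Real.Gamma_one_half_eq]
    have hpi : Real.sqrt π ≤ 2 := by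
      rw [show (2:ℝ) = Real.sqrt 4 by
        rw [show (4:ℝ) = 2^2 by norm_num, Real.sqrt_sq]; norm_num]
      exact Real.sqrt_le_sqrt (by linarith [Real.pi_le_four])
    norm_num
    linarith
  · have hk2 : (2:ℕ) ≤ k := h2
    have h25 : (2:ℝ) ≤ (k:ℝ) + 1/2 := by
      have : (2:ℝ) ≤ (k:ℝ) := by exact_mod_cast hk2
      linarith
    have := (Real.Gamma_strictMonoOn_Ici.monotoneOn) (a := (k:ℝ)+1/2) (b := (k:ℝ)+1)
      h25 (by simp only [mem_Ici]; linarith) (by linarith)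
    rwa [key] at this

lemma my_moment_bound (k : ℕ) (hk : 1 ≤ k) :
    ∫ z, z ^ (2*k) ∂(gaussianReal 0 1) ≤ (2:ℝ)^k * k.factorial := by
  rw [my_integral_gauss]
  have hcongr : ∀ x : ℝ, gaussianPDFReal 0 1 x * x ^ (2*k)
      = (√(2*π))⁻¹ * (x ^ (2*k) * exp (-x^2/2)) := by
    intro x; rw [my_pdf_eq]; ring
  rw [integral_congr_ae (Filter.Eventually.of_forall hcongr), integral_const_mul, my_int_real]
  have hΓpos : 0 < Real.Gamma ((k:ℝ) + 1/2) := Real.Gamma_pos_of_pos (by positivity)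
  have hΓ : Real.Gamma ((k:ℝ) + 1/2) ≤ k.factorial := my_gamma_le k hk
  have h2pos : (0:ℝ) < √2 := by positivity
  have hπ1 : (1:ℝ) ≤ √π := by
    rw [show (1:ℝ) = √1 by simp]
    exact Real.sqrt_le_sqrt (by linarith [Real.pi_gt_three])
  have hπpos : (0:ℝ) < √π := by linarith
  have hc : (√(2*π))⁻¹ * (2:ℝ) ^ ((k:ℝ) + 1/2) ≤ 2^k := by
    rw [Real.rpow_add two_pos, Real.rpow_natCast,
      show ((2:ℝ) ^ ((1:ℝ)/2)) = √2 by rw [Real.sqrt_eq_rpow],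
      Real.sqrt_mul (two_pos.le) π,
      show ((√2 * √π)⁻¹ * ((2:ℝ)^k * √2)) = 2^k / √π by field_simp]
    exact div_le_self (by positivity) hπ1
  rw [← mul_assoc]
  calc (√(2*π))⁻¹ * (2:ℝ) ^ ((k:ℝ) + 1/2) * Real.Gamma ((k:ℝ) + 1/2)
      ≤ (2:ℝ)^k * k.factorial :=
        mul_le_mul hc hΓ hΓpos.le (by positivity)

end aux


lemma my_nat_ineq (k m : ℕ) (hm1 : 1 ≤ m) (hmk : m ≤ k) (hkm : k - m ≤ m) :
    2^k * k.factorial + 1 ≤ 4^k * (m.factorial)^2 := by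
  have e : Nat.choose k m * m.factorial * (k-m).factorial = k.factorial :=
    Nat.choose_mul_factorial_mul_factorial hmk
  have h1 : k.factorial ≤ Nat.choose k m * (m.factorial)^2 := by
    calc k.factorial = Nat.choose k m * m.factorial * (k-m).factorial := e.symm
      _ ≤ Nat.choose k m * m.factorial * m.factorial :=
          Nat.mul_le_mul_left _ (Nat.factorial_le hkm)
      _ = Nat.choose k m * (m.factorial)^2 := by ring
  have h2 : Nat.choose k m + 1 ≤ 2^k := by
    have hsum := Nat.sum_range_choose k
    rw [← hsum, Finset.sum_range_succ']
    have hmem : m - 1 ∈ Finset.range k := by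
      rw [Finset.mem_range]; omega
    have := Finset.single_le_sum (f := fun i => Nat.choose k (i+1))
      (fun i _ => Nat.zero_le _) hmem
    have hm : k.choose (m - 1 + 1) = k.choose m := by rw [Nat.sub_add_cancel hm1]
    rw [hm] at this
    simpa using Nat.add_le_add this (le_refl (Nat.choose k 0))
  have hfac : 1 ≤ (m.factorial)^2 := Nat.one_le_iff_ne_zero.mpr (by positivity)
  calc 2^k * k.factorial + 1
      ≤ 2^k * (Nat.choose k m * (m.factorial)^2) + 2^k * (m.factorial)^2 := by
        have : 1 ≤ 2^k * (m.factorial)^2 := Nat.one_le_iff_ne_zero.mpr (by positivity)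
        exact Nat.add_le_add (Nat.mul_le_mul_left _ h1) this
    _ = 2^k * ((Nat.choose k m + 1) * (m.factorial)^2) := by ring
    _ ≤ 2^k * (2^k * (m.factorial)^2) := Nat.mul_le_mul_left _ (Nat.mul_le_mul_right _ h2)
    _ = 4^k * (m.factorial)^2 := by rw [show (4:ℕ) = 2*2 by norm_num, mul_pow]; ring

/-- For `Z` standard normal and every positive integer `k`,
`E|Z² − 1|^k ≤ 4^k (⌈k/2⌉!)²`. -/
theorem stmt4 (k : ℕ) (hk : 1 ≤ k) :
    (∫ z, |z ^ 2 - 1| ^ k ∂(gaussianReal 0 1)) ≤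
      (4 : ℝ) ^ k * ((Nat.factorial (Nat.ceil ((k : ℝ) / 2)) : ℝ) : ℝ) ^ 2 := by
  set m := Nat.ceil ((k : ℝ) / 2) with hm
  have hk1 : (1:ℝ) ≤ (k:ℝ) := by exact_mod_cast hk
  have hm1 : 1 ≤ m := Nat.ceil_pos.mpr (by linarith)
  have hmk : m ≤ k := Nat.ceil_le.mpr (by linarith)
  have hkm : k - m ≤ m := by
    have h := Nat.le_ceil ((k:ℝ)/2)
    have h2 : (k:ℝ) ≤ 2*m := by rw [hm]; linarith
    have h3 : k ≤ 2*m := by exact_mod_cast h2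
    omega
  have hint : Integrable (fun z : ℝ => z^(2*k) + 1) (gaussianReal 0 1) := by
    apply my_integrable_gauss
    have h1 : Integrable (fun x : ℝ =>
        (√(2*π))⁻¹ * (x^(2*k) * exp (-x^2/2)) + gaussianPDFReal 0 1 x) volume :=
      ((my_integrable_pow_exp k).const_mul _).add (integrable_gaussianPDFReal 0 1)
    refine h1.congr (Filter.Eventually.of_forall fun x => ?_)
    simp only [my_pdf_eq]; ring
  have hint2 : Integrable (fun z : ℝ => z^(2*k)) (gaussianReal 0 1) := by
    apply my_integrable_gauss
    refine (((my_integrable_pow_exp k).const_mul ((√(2*π))⁻¹)).congr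
      (Filter.Eventually.of_forall fun x => ?_))
    simp only [my_pdf_eq]; ring
  have hpt : ∀ z : ℝ, |z^2-1|^k ≤ z^(2*k) + 1 := by
    intro z
    have hz : (0:ℝ) ≤ z^2 := sq_nonneg z
    have hz2 : (0:ℝ) ≤ z^(2*k) := (even_two_mul k).pow_nonneg z
    rcases le_total (z^2) 1 with h | h
    · have habs : |z^2-1| ≤ 1 := by rw [abs_le]; constructor <;> linarith
      calc |z^2-1|^k ≤ 1^k := pow_le_pow_left₀ (abs_nonneg _) habs k
        _ = 1 := one_pow k
        _ ≤ z^(2*k)+1 := by linarith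
    · have habs : |z^2-1| ≤ z^2 := by rw [abs_le]; constructor <;> linarith
      calc |z^2-1|^k ≤ (z^2)^k := pow_le_pow_left₀ (abs_nonneg _) habs k
        _ = z^(2*k) := by rw [← pow_mul]
        _ ≤ z^(2*k)+1 := by linarith
  have step1 : (∫ z, |z ^ 2 - 1| ^ k ∂(gaussianReal 0 1))
      ≤ ∫ z, (z^(2*k) + 1) ∂(gaussianReal 0 1) :=
    integral_mono_of_nonneg (Filter.Eventually.of_forall fun z => by positivity)
      hint (Filter.Eventually.of_forall hpt)
  have step2 : (∫ z, (z^(2*k) + 1) ∂(gaussianReal 0 1))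
      = (∫ z, z^(2*k) ∂(gaussianReal 0 1)) + 1 := by
    rw [integral_add hint2 (integrable_const 1), integral_const]
    simp
  have step3 := my_moment_bound k hk
  have step4 : (2:ℝ)^k * k.factorial + 1 ≤ (4:ℝ)^k * (m.factorial:ℝ)^2 := by
    exact_mod_cast my_nat_ineq k m hm1 hmk hkm
  calc (∫ z, |z ^ 2 - 1| ^ k ∂(gaussianReal 0 1))
      ≤ (∫ z, z^(2*k) ∂(gaussianReal 0 1)) + 1 := by rw [← step2]; exact step1
    _ ≤ (2:ℝ)^k * k.factorial + 1 := by linarith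
    _ ≤ (4:ℝ)^k * (m.factorial:ℝ)^2 := step4
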